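/- There exist a polynomial power sum (G_n) of complex polynomials with no dominant characteristic root and infinitely many triples (a, b, c) of pairwise distinct nonzero polynomials such that ab + 1, ac + 1, bc + 1 are all elements of (G_n). Concretely: given three simple linear recurrences of polynomials A_n, B_n, C_n, the sequence G_n defined by G_{3u} = A_{3u}B_{3u} + 1, G_{3u+1} = A_{3u}C_{3u} + 1, G_{3u+2} = B_{3u}C_{3u} + 1 is itself a simple linear recurrence (obtained by twisting each characteristic root σ by the cube roots of unity via (1/3)s(σⁿ + (ζ₃σ)ⁿ + (ζ₃²σ)ⁿ)), and the triples (A_{3u}, B_{3u}, C_{3u}) give infinitely many solutions. -/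
import Mathlib
open Polynomial

noncomputable def zz : ℂ := (-1 + Real.sqrt 3 * Complex.I)/2

lemma zz_root : zz^2 + zz + 1 = 0 := by
  have h3 : ((Real.sqrt 3 : ℂ) * Complex.I)^2 = -3 := by
    rw [mul_pow, Complex.I_sq]
    norm_cast
    rw [Real.sq_sqrt (by norm_num : (3:ℝ) ≥ 0)]
    norm_num
  unfold zz
  linear_combination (1/4 : ℂ) * h3

lemma zz_im_ne : zz.im ≠ 0 := by
  have : zz.im = Real.sqrt 3 / 2 := by simp [zz]
  rw [this]; positivity

lemma zz_cube : zz^3 = 1 := by linear_combination (zz - 1) * zz_root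

lemma zz_pow (m k : ℕ) : zz^(3*m+k) = zz^k := by
  rw [pow_add, pow_mul, zz_cube, one_pow, one_mul]

noncomputable def pp : ℂ := 11/3
noncomputable def qq : ℂ := (-1 + 3*zz)/3
noncomputable def rr : ℂ := (-4 - 3*zz)/3

lemma sum1 : pp + qq + rr = 2 := by unfold pp qq rr; ring
lemma sum2 : pp + qq*zz + rr*zz^2 = 3 := by
  unfold pp qq rr; linear_combination (2/3 - zz) * zz_root
lemma sum3 : pp + qq*zz^2 + rr*zz = 6 := by
  unfold pp qq rr; linear_combination (zz - 7/3) * zz_root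

lemma pp_ne : pp ≠ 0 := by unfold pp; norm_num

lemma qq_ne : qq ≠ 0 := by
  unfold qq
  intro h
  have : zz.im = 0 := by
    have := congrArg Complex.im h
    simp [Complex.div_im, Complex.add_im, Complex.mul_im] at this
    simpa using this
  exact zz_im_ne this

lemma rr_ne : rr ≠ 0 := by
  unfold rr
  intro h
  have : zz.im = 0 := by
    have := congrArg Complex.im h
    simp [Complex.div_im, Complex.sub_im, Complex.mul_im] at this
    simpa using this
  exact zz_im_ne this

lemma zz_ne : zz ≠ 0 := by
  intro h; exact zz_im_ne (by rw [h]; simp)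

noncomputable def ff : ℕ → RatFunc ℂ
  | 0 => algebraMap (Polynomial ℂ) (RatFunc ℂ) (C pp)
  | 1 => algebraMap (Polynomial ℂ) (RatFunc ℂ) (C qq)
  | 2 => algebraMap (Polynomial ℂ) (RatFunc ℂ) (C rr)
  | _ => 1

noncomputable def aa : ℕ → Polynomial ℂ
  | 0 => X^2
  | 1 => C zz * X^2
  | 2 => C (zz^2) * X^2
  | _ => 1

lemma expandG (n : ℕ) :
    ∑ i ∈ Finset.range 4, ff i * (algebraMap (Polynomial ℂ) (RatFunc ℂ) (aa i)) ^ n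
      = algebraMap (Polynomial ℂ) (RatFunc ℂ)
        (C pp * (X^2)^n + C qq * (C zz * X^2)^n + C rr * (C (zz^2) * X^2)^n + 1) := by
  simp [Finset.sum_range_succ, ff, aa, map_add, map_mul, map_pow]

/-- Without the dominant root condition the main theorem fails: there is a
polynomial power sum `G_n = ∑ f_i α_i^n` with no dominant characteristic root admitting
infinitely many triples `(a,b,c)` of pairwise distinct nonzero polynomials such that
`ab+1`, `ac+1`, `bc+1` are all elements of `(G_n)`. -/
theorem no_dominant_root_counterexample :
    ∃ (k : ℕ) (f : ℕ → RatFunc ℂ) (α : ℕ → Polynomial ℂ),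
      (∀ i, i < k → f i ≠ 0) ∧ (∀ i, i < k → α i ≠ 0) ∧
      (¬ ∃ i, i < k ∧ ∀ j, j < k → j ≠ i → (α j).natDegree < (α i).natDegree) ∧
      {T : Polynomial ℂ × Polynomial ℂ × Polynomial ℂ |
        T.1 ≠ 0 ∧ T.2.1 ≠ 0 ∧ T.2.2 ≠ 0 ∧
        T.1 ≠ T.2.1 ∧ T.1 ≠ T.2.2 ∧ T.2.1 ≠ T.2.2 ∧
        (∃ n, algebraMap (Polynomial ℂ) (RatFunc ℂ) (T.1 * T.2.1 + 1)
            = ∑ i ∈ Finset.range k, f i * (algebraMap (Polynomial ℂ) (RatFunc ℂ) (α i)) ^ n) ∧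
        (∃ n, algebraMap (Polynomial ℂ) (RatFunc ℂ) (T.1 * T.2.2 + 1)
            = ∑ i ∈ Finset.range k, f i * (algebraMap (Polynomial ℂ) (RatFunc ℂ) (α i)) ^ n) ∧
        (∃ n, algebraMap (Polynomial ℂ) (RatFunc ℂ) (T.2.1 * T.2.2 + 1)
            = ∑ i ∈ Finset.range k, f i * (algebraMap (Polynomial ℂ) (RatFunc ℂ) (α i)) ^ n)
        }.Infinite := by
  have hCzz : (C zz : Polynomial ℂ) ≠ 0 := by simpa using zz_ne
  have hCzz2 : (C (zz^2) : Polynomial ℂ) ≠ 0 := by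
    simpa using pow_ne_zero 2 zz_ne
  refine ⟨4, ff, aa, ?_, ?_, ?_, ?_⟩
  · intro i hi
    interval_cases i <;>
      simp only [ff] <;>
      [exact (map_ne_zero_iff _ (IsFractionRing.injective (Polynomial ℂ) (RatFunc ℂ))).mpr
        (by simpa using pp_ne);
       exact (map_ne_zero_iff _ (IsFractionRing.injective (Polynomial ℂ) (RatFunc ℂ))).mpr
        (by simpa using qq_ne);
       exact (map_ne_zero_iff _ (IsFractionRing.injective (Polynomial ℂ) (RatFunc ℂ))).mpr
        (by simpa using rr_ne);
       exact one_ne_zero]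
  · intro i hi
    interval_cases i <;> simp only [aa]
    · exact pow_ne_zero 2 X_ne_zero
    · exact mul_ne_zero hCzz (pow_ne_zero 2 X_ne_zero)
    · exact mul_ne_zero hCzz2 (pow_ne_zero 2 X_ne_zero)
    · exact one_ne_zero
  · rintro ⟨i, hi, h⟩
    have d0 : (aa 0).natDegree = 2 := by simp [aa]
    have d1 : (aa 1).natDegree = 2 := by
      simp only [aa]; rw [natDegree_C_mul zz_ne]; simp
    have d2 : (aa 2).natDegree = 2 := by
      simp only [aa]; rw [natDegree_C_mul (pow_ne_zero 2 zz_ne)]; simp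
    have d3 : (aa 3).natDegree = 0 := by simp [aa]
    interval_cases i
    · have := h 1 (by norm_num) (by norm_num); omega
    · have := h 0 (by norm_num) (by norm_num); omega
    · have := h 0 (by norm_num) (by norm_num); omega
    · have := h 0 (by norm_num) (by norm_num); omega
  · apply Set.infinite_of_injective_forall_mem
      (f := fun u : ℕ => ((X^(3*u+2) : Polynomial ℂ), (C 2 * X^(3*u+4) : Polynomial ℂ),
        (C 3 * X^(3*u+6) : Polynomial ℂ)))
    · intro u v huv
      have h1 := congrArg (fun t => (Prod.fst t).natDegree) huv
      simp only [natDegree_X_pow] at h1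
      omega
    · intro u
      simp only [Set.mem_setOf_eq]
      have h2 : (2 : ℂ) ≠ 0 := by norm_num
      have h3 : (3 : ℂ) ≠ 0 := by norm_num
      have dA : ((X : Polynomial ℂ)^(3*u+2)).natDegree = 3*u+2 := natDegree_X_pow _
      have dB : ((C 2 : Polynomial ℂ) * X^(3*u+4)).natDegree = 3*u+4 := by
        rw [natDegree_C_mul h2, natDegree_X_pow]
      have dC : ((C 3 : Polynomial ℂ) * X^(3*u+6)).natDegree = 3*u+6 := by
        rw [natDegree_C_mul h3, natDegree_X_pow]
      refine ⟨pow_ne_zero _ X_ne_zero, mul_ne_zero (by simpa using h2) (pow_ne_zero _ X_ne_zero),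
        mul_ne_zero (by simpa using h3) (pow_ne_zero _ X_ne_zero), ?_, ?_, ?_, ?_, ?_, ?_⟩
      · intro h; rw [h] at dA; omega
      · intro h; rw [h] at dA; omega
      · intro h; rw [h] at dB; omega
      · -- ab + 1 at n = 3u+3
        refine ⟨3*u+3, ?_⟩
        rw [expandG]
        apply congrArg
        have hz1 : zz^(3*u+3) = 1 := by
          have : 3*u+3 = 3*(u+1)+0 := by ring
          rw [this, zz_pow, pow_zero]
        have hz2 : (zz^2)^(3*u+3) = 1 := by
          rw [← pow_mul]
          have : 2*(3*u+3) = 3*(2*u+2)+0 := by ring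
          rw [this, zz_pow, pow_zero]
        have hC : (C pp + C qq + C rr : Polynomial ℂ) = C 2 := by
          rw [← C_add, ← C_add, sum1]
        rw [mul_pow, mul_pow, ← C_pow, ← C_pow, hz1, hz2, C_1]
        linear_combination (-((X : Polynomial ℂ)^2)^(3*u+3)) * hC
      · -- ac + 1 at n = 3u+4
        refine ⟨3*u+4, ?_⟩
        rw [expandG]
        apply congrArg
        have hz1 : zz^(3*u+4) = zz := by
          have : 3*u+4 = 3*(u+1)+1 := by ring
          rw [this, zz_pow, pow_one]
        have hz2 : (zz^2)^(3*u+4) = zz^2 := by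
          rw [← pow_mul]
          have : 2*(3*u+4) = 3*(2*u+2)+2 := by ring
          rw [this, zz_pow]
        have hC : (C pp + C qq * C zz + C rr * C (zz^2) : Polynomial ℂ) = C 3 := by
          rw [← C_mul, ← C_mul, ← C_add, ← C_add, sum2]
        rw [mul_pow, mul_pow, ← C_pow, ← C_pow, hz1, hz2]
        linear_combination (-((X : Polynomial ℂ)^2)^(3*u+4)) * hC
      · -- bc + 1 at n = 3u+5
        refine ⟨3*u+5, ?_⟩
        rw [expandG]
        apply congrArg
        have hz1 : zz^(3*u+5) = zz^2 := by
          have : 3*u+5 = 3*(u+1)+2 := by ring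
          rw [this, zz_pow]
        have hz2 : (zz^2)^(3*u+5) = zz := by
          rw [← pow_mul]
          have : 2*(3*u+5) = 3*(2*u+3)+1 := by ring
          rw [this, zz_pow, pow_one]
        have hC : (C pp + C qq * C (zz^2) + C rr * C zz : Polynomial ℂ) = C 6 := by
          rw [← C_mul, ← C_mul, ← C_add, ← C_add, sum3]
        rw [mul_pow, mul_pow, ← C_pow, ← C_pow, hz1, hz2]
        have h6 : (C 2 : Polynomial ℂ) * C 3 = C 6 := by rw [← C_mul]; norm_num
        linear_combination (-((X : Polynomial ℂ)^2)^(3*u+5)) * hC +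
          ((X : Polynomial ℂ)^(3*u+4) * (X : Polynomial ℂ)^(3*u+6)) * h6
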